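/- Let Ω ⊆ ℝ³ be open and φ, v : Ω → ℝ three times continuously differentiable with ∂_zφ(x) ≠ 0 for every x ∈ Ω, and let v̇, φ̇ : Ω → ℝ be twice continuously differentiable. Then for all i, j ∈ {1,2,3} the pointwise identity holds on Ω: ∂_i^φ( ∂_j^φ v̇ − (∂_z^φ v)·(∂_j^φ φ̇) ) − (∂_i^φ φ̇)·∂_z^φ(∂_j^φ v) = ∂_i^φ ∂_j^φ ( v̇ − (∂_z^φ v)·φ̇ ) + φ̇ · ∂_z^φ( ∂_i^φ ∂_j^φ v ). -/

import Mathlib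

/-- The `i`-th partial derivative of a function on `ℝ³` (coordinates `x = (y₁, y₂, z)`,
with `z` the coordinate of index `2`). -/
noncomputable def pd (i : Fin 3) (f : (Fin 3 → ℝ) → ℝ) (x : Fin 3 → ℝ) : ℝ :=
  fderiv ℝ f x (Pi.single i 1)

/-- The operators `∂ᵢ^φ` associated to `φ`:
`∂₁^φ f = ∂₁f − (∂₁φ/∂_zφ)∂_zf`, `∂₂^φ f = ∂₂f − (∂₂φ/∂_zφ)∂_zf`,
`∂₃^φ f = ∂_z^φ f = (1/∂_zφ)∂_zf`. -/
noncomputable def pdphi (φ : (Fin 3 → ℝ) → ℝ) (i : Fin 3) (f : (Fin 3 → ℝ) → ℝ)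
    (x : Fin 3 → ℝ) : ℝ :=
  if i = 2 then pd 2 f x / pd 2 φ x
  else pd i f x - pd i φ x / pd 2 φ x * pd 2 f x

section Lemmas

variable {Ω : Set (Fin 3 → ℝ)} {φ f g : (Fin 3 → ℝ) → ℝ} {x : Fin 3 → ℝ} {i j : Fin 3}

lemma pd_sub (hf : DifferentiableAt ℝ f x) (hg : DifferentiableAt ℝ g x) :
    pd i (fun y => f y - g y) x = pd i f x - pd i g x := by
  simp [pd, fderiv_fun_sub hf hg]

lemma pd_mul (hf : DifferentiableAt ℝ f x) (hg : DifferentiableAt ℝ g x) :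
    pd i (fun y => f y * g y) x = pd i f x * g x + f x * pd i g x := by
  simp [pd, fderiv_fun_mul hf hg]; ring

lemma pd_inv (hg : DifferentiableAt ℝ g x) (h0 : g x ≠ 0) :
    pd i (fun y => (g y)⁻¹) x = -pd i g x / (g x)^2 := by
  have h : HasFDerivAt (fun y => (g y)⁻¹) ((-(g x ^ 2)⁻¹ : ℝ) • fderiv ℝ g x) x :=
    (hasDerivAt_inv h0).comp_hasFDerivAt x hg.hasFDerivAt
  rw [pd, h.fderiv]
  simp [pd]
  field_simp

lemma pd_div (hf : DifferentiableAt ℝ f x) (hg : DifferentiableAt ℝ g x) (h0 : g x ≠ 0) :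
    pd i (fun y => f y / g y) x = (pd i f x * g x - f x * pd i g x) / (g x)^2 := by
  have : (fun y => f y / g y) = fun y => f y * (g y)⁻¹ := by
    funext y; rw [div_eq_mul_inv]
  rw [this, pd_mul (g := fun y => (g y)⁻¹) hf (hg.inv h0), pd_inv hg h0]
  field_simp
  ring

lemma pd_comm (hf : ContDiffAt ℝ 2 f x) : pd i (pd j f) x = pd j (pd i f) x := by
  have hd : DifferentiableAt ℝ (fderiv ℝ f) x :=
    ((hf.fderiv_right (m := 1) (by norm_num)).differentiableAt (by norm_num))
  have hsymm := hf.isSymmSndFDerivAt (by simp)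
  have key : ∀ k l : Fin 3, pd k (pd l f) x =
      fderiv ℝ (fderiv ℝ f) x (Pi.single k 1) (Pi.single l 1) := by
    intro k l
    have : pd l f = fun y => fderiv ℝ f y (Pi.single l 1) := rfl
    rw [pd, this, fderiv_clm_apply hd (differentiableAt_const _)]
    simp
  rw [key i j, key j i, hsymm]

lemma pd_contDiffOn {n m : WithTop ℕ∞} (hΩ : IsOpen Ω) (hf : ContDiffOn ℝ n f Ω)
    (hmn : m + 1 ≤ n) (i : Fin 3) : ContDiffOn ℝ m (pd i f) Ω :=
  (hf.fderiv_of_isOpen hΩ hmn).clm_apply contDiffOn_const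

lemma diffAt_of_contDiffOn (hΩ : IsOpen Ω) {n : WithTop ℕ∞} (hn : 1 ≤ n)
    (hf : ContDiffOn ℝ n f Ω) (hx : x ∈ Ω) : DifferentiableAt ℝ f x :=
  ((hf.of_le hn).contDiffAt (hΩ.mem_nhds hx)).differentiableAt one_ne_zero

lemma pd_diffAt (hΩ : IsOpen Ω) (hf : ContDiffOn ℝ 2 f Ω) (hx : x ∈ Ω) (k : Fin 3) :
    DifferentiableAt ℝ (pd k f) x :=
  diffAt_of_contDiffOn hΩ le_rfl (pd_contDiffOn hΩ hf (by norm_num) k) hx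

lemma pdphi_contDiffOn {n m : WithTop ℕ∞} (hΩ : IsOpen Ω) (hφ : ContDiffOn ℝ n φ Ω)
    (hf : ContDiffOn ℝ n f Ω) (hmn : m + 1 ≤ n) (hz : ∀ y ∈ Ω, pd 2 φ y ≠ 0) (i : Fin 3) :
    ContDiffOn ℝ m (pdphi φ i f) Ω := by
  have hfi := fun k => pd_contDiffOn hΩ hf hmn k
  have hφi := fun k => pd_contDiffOn hΩ hφ hmn k
  by_cases h : i = 2
  · have e : pdphi φ i f = fun y => pd 2 f y / pd 2 φ y := by funext y; simp [pdphi, h]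
    rw [e]; exact (hfi 2).div (hφi 2) hz
  · have e : pdphi φ i f = fun y => pd i f y - pd i φ y / pd 2 φ y * pd 2 f y := by
      funext y; simp [pdphi, h]
    rw [e]; exact (hfi i).sub (((hφi i).div (hφi 2) hz).mul (hfi 2))

lemma pdphi_sub (hf : DifferentiableAt ℝ f x) (hg : DifferentiableAt ℝ g x) :
    pdphi φ i (fun y => f y - g y) x = pdphi φ i f x - pdphi φ i g x := by
  unfold pdphi
  split <;> simp only [pd_sub hf hg] <;> ring

lemma pdphi_mul (hf : DifferentiableAt ℝ f x) (hg : DifferentiableAt ℝ g x) :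
    pdphi φ i (fun y => f y * g y) x = pdphi φ i f x * g x + f x * pdphi φ i g x := by
  unfold pdphi
  split <;> simp only [pd_mul hf hg] <;> ring

lemma pdphi_congr (hΩ : IsOpen Ω) {F G : (Fin 3 → ℝ) → ℝ} (h : ∀ y ∈ Ω, F y = G y)
    (hx : x ∈ Ω) : pdphi φ i F x = pdphi φ i G x := by
  have hev : F =ᶠ[nhds x] G := Filter.eventuallyEq_of_mem (hΩ.mem_nhds hx) h
  have hpd : ∀ k : Fin 3, pd k F x = pd k G x := fun k => by
    rw [pd, pd, hev.fderiv_eq]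
  simp only [pdphi, hpd]

lemma pdphi_comm (hΩ : IsOpen Ω) (hφ : ContDiffOn ℝ 2 φ Ω) (hf : ContDiffOn ℝ 2 f Ω)
    (hz : ∀ y ∈ Ω, pd 2 φ y ≠ 0) (i : Fin 3) (hx : x ∈ Ω) :
    pdphi φ i (pdphi φ 2 f) x = pdphi φ 2 (pdphi φ i f) x := by
  by_cases h2 : i = 2
  · rw [h2]
  · have hp := hz x hx
    have hdf : ∀ k : Fin 3, DifferentiableAt ℝ (pd k f) x := pd_diffAt hΩ hf hx
    have hdφ : ∀ k : Fin 3, DifferentiableAt ℝ (pd k φ) x := pd_diffAt hΩ hφ hx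
    have e2 : pdphi φ 2 f = fun y => pd 2 f y / pd 2 φ y := by
      funext y; simp [pdphi]
    have ei : pdphi φ i f = fun y => pd i f y - pd i φ y / pd 2 φ y * pd 2 f y := by
      funext y; simp [pdphi, h2]
    have c1 : ∀ k : Fin 3, pd k (fun y => pd 2 f y / pd 2 φ y) x
        = (pd k (pd 2 f) x * pd 2 φ x - pd 2 f x * pd k (pd 2 φ) x) / (pd 2 φ x)^2 :=
      fun k => pd_div (hdf 2) (hdφ 2) hp
    have hdiv : DifferentiableAt ℝ (fun y => pd i φ y / pd 2 φ y) x := by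
      simp only [div_eq_mul_inv]
      exact (hdφ i).mul ((hdφ 2).inv hp)
    have c2 : pd 2 (fun y => pd i f y - pd i φ y / pd 2 φ y * pd 2 f y) x
        = pd 2 (pd i f) x -
          ((pd 2 (pd i φ) x * pd 2 φ x - pd i φ x * pd 2 (pd 2 φ) x) / (pd 2 φ x)^2 * pd 2 f x
            + pd i φ x / pd 2 φ x * pd 2 (pd 2 f) x) := by
      rw [pd_sub (g := fun y => pd i φ y / pd 2 φ y * pd 2 f y) (hdf i) (hdiv.mul (hdf 2)), pd_mul hdiv (hdf 2), pd_div (hdφ i) (hdφ 2) hp]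
    have sf : pd i (pd 2 f) x = pd 2 (pd i f) x := pd_comm (hf.contDiffAt (hΩ.mem_nhds hx))
    have sφ : pd i (pd 2 φ) x = pd 2 (pd i φ) x := pd_comm (hφ.contDiffAt (hΩ.mem_nhds hx))
    rw [e2, ei]
    simp only [pdphi, if_neg h2, if_pos rfl, eq_self_iff_true, if_true]
    rw [c1 i, c1 2, c2, sf, sφ]
    field_simp
    ring

end Lemmas

/-- Alinhac's second-order identity (2.28) of Lemma 2.7:
`∂ᵢ^φ(∂ⱼ^φ v̇ − (∂_z^φ v)(∂ⱼ^φ φ̇)) − (∂ᵢ^φ φ̇) ∂_z^φ(∂ⱼ^φ v)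
  = ∂ᵢ^φ ∂ⱼ^φ (v̇ − (∂_z^φ v) φ̇) + φ̇ ∂_z^φ(∂ᵢ^φ ∂ⱼ^φ v)`. -/
theorem alinhac_second_order (Ω : Set (Fin 3 → ℝ)) (hΩ : IsOpen Ω)
    (φ v vdot φdot : (Fin 3 → ℝ) → ℝ)
    (hφ : ContDiffOn ℝ 3 φ Ω) (hv : ContDiffOn ℝ 3 v Ω)
    (hvdot : ContDiffOn ℝ 2 vdot Ω) (hφdot : ContDiffOn ℝ 2 φdot Ω)
    (hz : ∀ x ∈ Ω, pd 2 φ x ≠ 0) :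
    ∀ i j : Fin 3, ∀ x ∈ Ω,
      pdphi φ i (fun y => pdphi φ j vdot y - pdphi φ 2 v y * pdphi φ j φdot y) x
          - pdphi φ i φdot x * pdphi φ 2 (pdphi φ j v) x
        = pdphi φ i (pdphi φ j (fun y => vdot y - pdphi φ 2 v y * φdot y)) x
          + φdot x * pdphi φ 2 (pdphi φ i (pdphi φ j v)) x := by
  intro i j x hx
  have hφ2 : ContDiffOn ℝ 2 φ Ω := hφ.of_le (by norm_num)
  -- smoothness of the basic blocks
  have hG2 : ContDiffOn ℝ 2 (pdphi φ 2 v) Ω :=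
    pdphi_contDiffOn hΩ hφ hv (by norm_num) hz 2
  have hjv2 : ContDiffOn ℝ 2 (pdphi φ j v) Ω :=
    pdphi_contDiffOn hΩ hφ hv (by norm_num) hz j
  have hH1 : ContDiffOn ℝ 1 (pdphi φ 2 (pdphi φ j v)) Ω :=
    pdphi_contDiffOn hΩ hφ2 hjv2 (by norm_num) hz 2
  have hjvdot1 : ContDiffOn ℝ 1 (pdphi φ j vdot) Ω :=
    pdphi_contDiffOn hΩ hφ2 hvdot (by norm_num) hz j
  have hjφdot1 : ContDiffOn ℝ 1 (pdphi φ j φdot) Ω :=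
    pdphi_contDiffOn hΩ hφ2 hφdot (by norm_num) hz j
  have hA1 : ContDiffOn ℝ 1
      (fun y => pdphi φ j vdot y - pdphi φ 2 v y * pdphi φ j φdot y) Ω :=
    hjvdot1.sub ((hG2.of_le (by norm_num)).mul hjφdot1)
  -- Step 1: first-order Alinhac identity, valid on all of Ω
  have step1 : ∀ y ∈ Ω,
      pdphi φ j (fun y' => vdot y' - pdphi φ 2 v y' * φdot y') y
        = (pdphi φ j vdot y - pdphi φ 2 v y * pdphi φ j φdot y)
          - φdot y * pdphi φ 2 (pdphi φ j v) y := by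
    intro y hy
    have dvdot : DifferentiableAt ℝ vdot y := diffAt_of_contDiffOn hΩ (by norm_num) hvdot hy
    have dφdot : DifferentiableAt ℝ φdot y := diffAt_of_contDiffOn hΩ (by norm_num) hφdot hy
    have dG : DifferentiableAt ℝ (pdphi φ 2 v) y :=
      diffAt_of_contDiffOn hΩ (by norm_num) hG2 hy
    have e1 : pdphi φ j (fun y' => vdot y' - pdphi φ 2 v y' * φdot y') y
        = pdphi φ j vdot y - pdphi φ j (fun y' => pdphi φ 2 v y' * φdot y') y :=
      pdphi_sub dvdot (dG.mul dφdot)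
    have e2 : pdphi φ j (fun y' => pdphi φ 2 v y' * φdot y') y
        = pdphi φ j (pdphi φ 2 v) y * φdot y + pdphi φ 2 v y * pdphi φ j φdot y :=
      pdphi_mul dG dφdot
    have e3 : pdphi φ j (pdphi φ 2 v) y = pdphi φ 2 (pdphi φ j v) y :=
      pdphi_comm hΩ hφ2 (hv.of_le (by norm_num)) hz j hy
    rw [e1, e2, e3]; ring
  -- Step 2: apply `∂ᵢ^φ` at `x`
  have congr1 : pdphi φ i (pdphi φ j (fun y => vdot y - pdphi φ 2 v y * φdot y)) x
      = pdphi φ i (fun y => (pdphi φ j vdot y - pdphi φ 2 v y * pdphi φ j φdot y)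
          - φdot y * pdphi φ 2 (pdphi φ j v) y) x :=
    pdphi_congr hΩ step1 hx
  have dA : DifferentiableAt ℝ
      (fun y => pdphi φ j vdot y - pdphi φ 2 v y * pdphi φ j φdot y) x :=
    diffAt_of_contDiffOn hΩ le_rfl hA1 hx
  have dφdot : DifferentiableAt ℝ φdot x := diffAt_of_contDiffOn hΩ (by norm_num) hφdot hx
  have dH : DifferentiableAt ℝ (pdphi φ 2 (pdphi φ j v)) x :=
    diffAt_of_contDiffOn hΩ le_rfl hH1 hx
  have e4 : pdphi φ i (fun y => (pdphi φ j vdot y - pdphi φ 2 v y * pdphi φ j φdot y)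
        - φdot y * pdphi φ 2 (pdphi φ j v) y) x
      = pdphi φ i (fun y => pdphi φ j vdot y - pdphi φ 2 v y * pdphi φ j φdot y) x
        - (pdphi φ i φdot x * pdphi φ 2 (pdphi φ j v) x
            + φdot x * pdphi φ i (pdphi φ 2 (pdphi φ j v)) x) := by
    rw [pdphi_sub (g := fun y => φdot y * pdphi φ 2 (pdphi φ j v) y) dA (dφdot.mul dH), pdphi_mul dφdot dH]
  have e5 : pdphi φ i (pdphi φ 2 (pdphi φ j v)) x
      = pdphi φ 2 (pdphi φ i (pdphi φ j v)) x :=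
    pdphi_comm hΩ hφ2 hjv2 hz i hx
  rw [congr1, e4, e5]; ring
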